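/- Let d ∈ ℕ, let G be a digraph on n vertices, and let A ⊆ V(G). Then the number of equivalence classes of ≡±_{d,A} on subsets of A satisfies nec(≡±_{d,A}) ≤ n^{d · bimim_G(A)}. -/
import Mathlib


open scoped Classical

/-- An induced matching in a digraph with edge relation `D`: a finite set of edges of `D`,
no two of which share an endpoint, such that no edge of `D` joins an endpoint of one
matching edge to an endpoint of a different matching edge. -/
def IsIndMatching {V : Type} (D : V → V → Prop) (M : Finset (V × V)) : Prop :=
  (∀ e ∈ M, D e.1 e.2) ∧
    ∀ e ∈ M, ∀ f ∈ M, e ≠ f →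
      ∀ x, (x = e.1 ∨ x = e.2) → ∀ y, (y = f.1 ∨ y = f.2) → x ≠ y ∧ ¬D x y

/-- `ν(D)`: the maximum size of an induced matching in the digraph `D`. -/
noncomputable def nu {V : Type} (D : V → V → Prop) : ℕ :=
  sSup {n | ∃ M : Finset (V × V), IsIndMatching D M ∧ M.card = n}

/-- The bipartite digraph `G[A→B]`, whose edges are the edges of `E` from `A` to `B`. -/
def cutRel {V : Type} (E : V → V → Prop) (A B : Set V) : V → V → Prop :=
  fun x y => x ∈ A ∧ y ∈ B ∧ E x y

/-- `bimim_G(A) = ν(G[A→Ā]) + ν(G[Ā→A])`. -/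
noncomputable def bimimCut {V : Type} (E : V → V → Prop) (A : Set V) : ℕ :=
  nu (cutRel E A Aᶜ) + nu (cutRel E Aᶜ A)

/-- For an undirected graph `G`, `mim_G(A) = ν(G[A, Ā])`. -/
noncomputable def mimCut {V : Type} (G : SimpleGraph V) (A : Set V) : ℕ :=
  nu (cutRel G.Adj A Aᶜ)
/-- `|N⁺(v) ∩ S|`. -/
noncomputable def outDeg {V : Type} (E : V → V → Prop) (v : V) (S : Set V) : ℕ :=
  Nat.card {w : V | E v w ∧ w ∈ S}

/-- `|N⁻(v) ∩ S|`. -/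
noncomputable def inDeg {V : Type} (E : V → V → Prop) (v : V) (S : Set V) : ℕ :=
  Nat.card {w : V | E w v ∧ w ∈ S}

/-- `S` `(μ⁺, μ⁻)`-dominates `A`. -/
def MDominates {V : Type} (E : V → V → Prop) (μp μm : Set ℕ) (S A : Set V) : Prop :=
  ∀ v ∈ A, outDeg E v S ∈ μp ∧ inDeg E v S ∈ μm

/-- The pair `(X, Y)` `(Σ, Ρ)`-dominates `A`:
`X ∪ Y` `Σ`-dominates `X` and `X ∪ Y` `Ρ`-dominates `A ∖ X`. -/
def PairDominates {V : Type} (E : V → V → Prop) (σp σm ρp ρm : Set ℕ)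
    (A X Y : Set V) : Prop :=
  MDominates E σp σm (X ∪ Y) X ∧ MDominates E ρp ρm (X ∪ Y) (A \ X)

/-- `X ≡⁺_{d,B} Y`. -/
def EquivPlus {V : Type} (E : V → V → Prop) (d : ℕ) (B X Y : Set V) : Prop :=
  ∀ u ∉ B, min d (inDeg E u X) = min d (inDeg E u Y)

/-- `X ≡⁻_{d,B} Y`. -/
def EquivMinus {V : Type} (E : V → V → Prop) (d : ℕ) (B X Y : Set V) : Prop :=
  ∀ u ∉ B, min d (outDeg E u X) = min d (outDeg E u Y)

/-- `X ≡±_{d,B} Y`. -/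
def EquivBoth {V : Type} (E : V → V → Prop) (d : ℕ) (B X Y : Set V) : Prop :=
  EquivPlus E d B X Y ∧ EquivMinus E d B X Y

section Helpers
variable {V : Type} [Fintype V]

lemma isIndMatching_empty (D : V → V → Prop) : IsIndMatching D (∅ : Finset (V × V)) := by
  constructor
  · intro e he; simp at he
  · intro e he; simp at he

lemma isIndMatching_singleton {D : V → V → Prop} {x y : V} (h : D x y) :
    IsIndMatching D ({(x, y)} : Finset (V × V)) := by
  constructor
  · intro e he; simp at he; subst he; exact h
  · intro e he f hf hne
    simp at he hf; subst he; subst hf; exact absurd rfl hne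

lemma card_le_of_isIndMatching {D : V → V → Prop} {M : Finset (V × V)}
    (h : IsIndMatching D M) : M.card ≤ Fintype.card V := by
  classical
  have : M.card = (M.image Prod.fst).card := by
    rw [Finset.card_image_of_injOn]
    intro e he f hf hef
    by_contra hne
    exact ((h.2 e he f hf hne e.1 (Or.inl rfl) f.1 (Or.inl rfl)).1 hef)
  rw [this]
  simpa using Finset.card_le_card (Finset.subset_univ _)

lemma bddAbove_matchings (D : V → V → Prop) :
    BddAbove {n | ∃ M : Finset (V × V), IsIndMatching D M ∧ M.card = n} := by
  refine ⟨Fintype.card V, ?_⟩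
  rintro n ⟨M, hM, rfl⟩
  exact card_le_of_isIndMatching hM

lemma card_le_nu {D : V → V → Prop} {M : Finset (V × V)} (h : IsIndMatching D M) :
    M.card ≤ nu D :=
  le_csSup (bddAbove_matchings D) ⟨M, h, rfl⟩

lemma nu_eq_zero (D : V → V → Prop) (h : ∀ x y, ¬ D x y) : nu D = 0 := by
  have : {n | ∃ M : Finset (V × V), IsIndMatching D M ∧ M.card = n} = {0} := by
    ext n
    constructor
    · rintro ⟨M, hM, rfl⟩
      have : M = ∅ := by
        by_contra hne
        obtain ⟨e, he⟩ := Finset.nonempty_iff_ne_empty.2 hne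
        exact h e.1 e.2 (hM.1 e he)
      simp [this]
    · rintro rfl
      exact ⟨∅, isIndMatching_empty D, rfl⟩
  rw [nu, this, csSup_singleton]

lemma isIndMatching_swap {D : V → V → Prop} {M : Finset (V × V)}
    (h : IsIndMatching (fun x y => D y x) M) :
    IsIndMatching D (M.image Prod.swap) := by
  classical
  constructor
  · rintro e he
    obtain ⟨e', he', rfl⟩ := Finset.mem_image.1 he
    exact h.1 e' he'
  · rintro e he f hf hne x hx y hy
    obtain ⟨e', he', rfl⟩ := Finset.mem_image.1 he
    obtain ⟨f', hf', rfl⟩ := Finset.mem_image.1 hf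
    have hne' : f' ≠ e' := by
      intro hh; exact hne (by rw [hh])
    have hx' : x = e'.1 ∨ x = e'.2 := by
      rcases hx with h1 | h1 <;> simp [Prod.swap] at h1 <;> [exact Or.inr h1; exact Or.inl h1]
    have hy' : y = f'.1 ∨ y = f'.2 := by
      rcases hy with h1 | h1 <;> simp [Prod.swap] at h1 <;> [exact Or.inr h1; exact Or.inl h1]
    have := h.2 f' hf' e' he' hne' y hy' x hx'
    exact ⟨this.1.symm, this.2⟩

end Helpers
section Core
set_option linter.unusedSectionVars false
variable {V : Type} [Fintype V]

/-- Core extraction lemma: if every `v ∈ R` has a neighbor in the permitted set `P`,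
and every permitted right vertex has at most `d` neighbors in `R`, then there is an
induced matching `M` with `|R| ≤ d·|M|`. -/
lemma core_extraction (D : V → V → Prop) (S T : Set V)
    (hb : ∀ x y, D x y → x ∈ S ∧ y ∈ T) (hd : Disjoint S T) (d : ℕ) :
    ∀ R P : Finset V,
      (∀ u ∈ P, (R.filter (fun w => D w u)).card ≤ d) →
      (∀ v ∈ R, ∃ u ∈ P, D v u) →
      ∃ M : Finset (V × V), IsIndMatching D M ∧ (∀ e ∈ M, e.1 ∈ R ∧ e.2 ∈ P) ∧
        R.card ≤ d * M.card := by
  classical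
  intro R
  induction R using Finset.strongInduction with
  | _ R ih =>
    intro P hP hRP
    rcases Finset.eq_empty_or_nonempty R with rfl | hRne
    · exact ⟨∅, isIndMatching_empty D, by simp, by simp⟩
    obtain ⟨vs, hvsR, hvsmin⟩ :=
      Finset.exists_min_image R (fun v => (P.filter (fun u => D v u)).card) hRne
    obtain ⟨us, husP, hDvu⟩ := hRP vs hvsR
    set R' : Finset V := R.filter (fun w => ¬ D w us) with hR'def
    set P' : Finset V := P.filter (fun u => ¬ D vs u) with hP'def
    have hR'sub : R' ⊆ R := Finset.filter_subset _ _
    have hP'sub : P' ⊆ P := Finset.filter_subset _ _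
    have hvsR' : vs ∉ R' := by
      simp only [hR'def, Finset.mem_filter, not_and, not_not]
      intro _; exact hDvu
    have hR'ss : R' ⊂ R := Finset.ssubset_iff_of_subset hR'sub |>.2 ⟨vs, hvsR, hvsR'⟩
    -- hypothesis preservation
    have hP'new : ∀ u ∈ P', (R'.filter (fun w => D w u)).card ≤ d := by
      intro u hu
      exact le_trans (Finset.card_le_card (Finset.filter_subset_filter _ hR'sub)) (hP u (hP'sub hu))
    have hRP' : ∀ v ∈ R', ∃ u ∈ P', D v u := by
      intro v hv
      by_contra hcon
      push_neg at hcon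
      -- all P-neighbors of v are P-neighbors of vs
      have hsub : P.filter (fun u => D v u) ⊆ P.filter (fun u => D vs u) := by
        intro u hu
        rw [Finset.mem_filter] at hu ⊢
        refine ⟨hu.1, ?_⟩
        by_contra hnvs
        exact hcon u (Finset.mem_filter.2 ⟨hu.1, hnvs⟩) hu.2
      have heq : P.filter (fun u => D v u) = P.filter (fun u => D vs u) :=
        Finset.eq_of_subset_of_card_le hsub (le_trans (hvsmin v (hR'sub hv))
          (le_refl _))
      have : D v us := by
        have : us ∈ P.filter (fun u => D vs u) := Finset.mem_filter.2 ⟨husP, hDvu⟩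
        rw [← heq] at this
        exact (Finset.mem_filter.1 this).2
      have := (Finset.mem_filter.1 hv).2
      exact this ‹D v us›
    obtain ⟨M', hM', hM'mem, hM'card⟩ := ih R' hR'ss P' hP'new hRP'
    -- facts about the new pair
    have hvsS : vs ∈ S := (hb _ _ hDvu).1
    have husT : us ∈ T := (hb _ _ hDvu).2
    have hpair_notmem : (vs, us) ∉ M' := by
      intro hmem
      exact hvsR' (hM'mem _ hmem).1
    refine ⟨insert (vs, us) M', ?_, ?_, ?_⟩
    · constructor
      · intro e he
        rcases Finset.mem_insert.1 he with rfl | he'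
        · exact hDvu
        · exact hM'.1 e he'
      · intro e he f hf hne x hx y hy
        rcases Finset.mem_insert.1 he with rfl | he' <;> rcases Finset.mem_insert.1 hf with rfl | hf'
        · exact absurd rfl hne
        · -- e = (vs, us), f ∈ M'
          have hf1R' : f.1 ∈ R' := (hM'mem f hf').1
          have hf2P' : f.2 ∈ P' := (hM'mem f hf').2
          have hf1S : f.1 ∈ S := (hb _ _ (hM'.1 f hf')).1
          have hf2T : f.2 ∈ T := (hb _ _ (hM'.1 f hf')).2
          have hf1nus : ¬ D f.1 us := (Finset.mem_filter.1 hf1R').2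
          have hf2nvs : ¬ D vs f.2 := (Finset.mem_filter.1 hf2P').2
          simp only at hx hy
          rcases hx with rfl | rfl <;> rcases hy with rfl | rfl
          · exact ⟨fun hh => hvsR' (hh ▸ hf1R'),
              fun hh => (hd.ne_of_mem hf1S (hb _ _ hh).2) rfl⟩
          · exact ⟨hd.ne_of_mem hvsS hf2T, hf2nvs⟩
          · exact ⟨fun hh => hd.ne_of_mem hf1S husT hh.symm,
              fun hh => (hd.ne_of_mem (hb _ _ hh).1 husT) rfl⟩
          · exact ⟨fun hh => hf2nvs (by rw [← hh]; exact hDvu),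
              fun hh => (hd.ne_of_mem (hb _ _ hh).1 husT) rfl⟩
        · -- e ∈ M', f = (vs, us)
          have he1R' : e.1 ∈ R' := (hM'mem e he').1
          have he2P' : e.2 ∈ P' := (hM'mem e he').2
          have he1S : e.1 ∈ S := (hb _ _ (hM'.1 e he')).1
          have he2T : e.2 ∈ T := (hb _ _ (hM'.1 e he')).2
          have he1nus : ¬ D e.1 us := (Finset.mem_filter.1 he1R').2
          have he2nvs : ¬ D vs e.2 := (Finset.mem_filter.1 he2P').2
          simp only at hx hy
          rcases hx with rfl | rfl <;> rcases hy with rfl | rfl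
          · exact ⟨fun hh => hvsR' (hh ▸ he1R'),
              fun hh => (hd.ne_of_mem hvsS (hb _ _ hh).2) rfl⟩
          · exact ⟨hd.ne_of_mem he1S husT, he1nus⟩
          · exact ⟨fun hh => hd.ne_of_mem hvsS he2T hh.symm,
              fun hh => (hd.ne_of_mem (hb _ _ hh).1 he2T) rfl⟩
          · exact ⟨fun hh => he2nvs (by rw [hh]; exact hDvu),
              fun hh => (hd.ne_of_mem (hb _ _ hh).1 he2T) rfl⟩
        · exact hM'.2 e he' f hf' hne x hx y hy
    · intro e he
      rcases Finset.mem_insert.1 he with rfl | he'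
      · exact ⟨hvsR, husP⟩
      · exact ⟨hR'sub (hM'mem e he').1, hP'sub (hM'mem e he').2⟩
    · rw [Finset.card_insert_of_notMem hpair_notmem, Nat.mul_succ]
      have hsplit : (R.filter (fun w => D w us)).card + R'.card = R.card := by
        simpa using Finset.card_filter_add_card_filter_not
          (s := R) (p := fun w => D w us)
      have : R.card ≤ R'.card + d := by
        rw [← hsplit]
        have := hP us husP
        omega
      omega

end Core
section Deg
set_option linter.unusedSectionVars false
variable {V : Type} [Fintype V]

lemma inDeg_coe (E : V → V → Prop) (u : V) (R : Finset V) :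
    inDeg E u ↑R = (R.filter (fun w => E w u)).card := by
  classical
  rw [inDeg]
  have : {w : V | E w u ∧ w ∈ (↑R : Set V)} = ↑(R.filter (fun w => E w u)) := by
    ext w; simp [and_comm]
  rw [this, Nat.card_coe_set_eq, Set.ncard_coe_finset]

lemma outDeg_coe (E : V → V → Prop) (u : V) (R : Finset V) :
    outDeg E u ↑R = (R.filter (fun w => E u w)).card := by
  classical
  rw [outDeg]
  have : {w : V | E u w ∧ w ∈ (↑R : Set V)} = ↑(R.filter (fun w => E u w)) := by
    ext w; simp [and_comm]
  rw [this, Nat.card_coe_set_eq, Set.ncard_coe_finset]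

lemma min_ne_of_erase {d c : ℕ} (h : min d c ≠ min d (c - 1)) : c ≤ d := by
  by_contra hlt
  push_neg at hlt
  have h1 : min d c = d := min_eq_left (le_of_lt hlt)
  have h2 : min d (c - 1) = d := min_eq_left (by omega)
  omega

/-- Existence of a minimal equivalent subset. -/
lemma exists_minimal_rep {E : V → V → Prop} {dd : ℕ} {A X : Set V} :
    ∀ R₀ : Finset V, ↑R₀ ⊆ X → EquivBoth E dd A X ↑R₀ →
      ∃ R : Finset V, ↑R ⊆ X ∧ EquivBoth E dd A X ↑R ∧
        ∀ v ∈ R, ¬ (EquivBoth E dd A X ↑(R.erase v)) := by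
  classical
  intro R₀
  induction R₀ using Finset.strongInduction with
  | _ R₀ ih =>
    intro hsub heq
    by_cases hcase : ∃ v ∈ R₀, EquivBoth E dd A X ↑(R₀.erase v)
    · obtain ⟨v, hv, heq'⟩ := hcase
      exact ih (R₀.erase v) (Finset.erase_ssubset hv)
        (le_trans (Finset.coe_subset.2 (Finset.erase_subset v R₀)) hsub) heq'
    · push_neg at hcase
      exact ⟨R₀, hsub, heq, hcase⟩

end Deg
section Rep
set_option linter.unusedSectionVars false
variable {V : Type} [Fintype V]

lemma rep_lemma (E : V → V → Prop) (d : ℕ) (A X : Set V) (hX : X ⊆ A) :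
    ∃ R : Finset V, ↑R ⊆ A ∧ EquivBoth E d A X ↑R ∧ R.card ≤ d * bimimCut E A := by
  classical
  have hrefl : EquivBoth E d A X ↑(X.toFinset) := by
    rw [Set.coe_toFinset]
    exact ⟨fun u _ => rfl, fun u _ => rfl⟩
  obtain ⟨R, hRX, hReq, hRmin⟩ :=
    exists_minimal_rep X.toFinset (by rw [Set.coe_toFinset]) hrefl
  have hRA : ↑R ⊆ A := le_trans hRX hX
  -- witnesses
  have hwit : ∀ v ∈ R,
      (∃ u, u ∉ A ∧ E v u ∧ (R.filter (fun w => E w u)).card ≤ d) ∨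
      (∃ u, u ∉ A ∧ E u v ∧ (R.filter (fun w => E u w)).card ≤ d) := by
    intro v hv
    have hnot := hRmin v hv
    rw [EquivBoth, not_and_or] at hnot
    rcases hnot with hnot | hnot
    · left
      rw [EquivPlus] at hnot
      push_neg at hnot
      obtain ⟨u, hu, hne⟩ := hnot
      have h1 : min d (inDeg E u X) = min d (inDeg E u ↑R) := hReq.1 u hu
      rw [h1] at hne
      rw [inDeg_coe, inDeg_coe, Finset.filter_erase] at hne
      by_cases hvf : v ∈ R.filter (fun w => E w u)
      · rw [Finset.card_erase_of_mem hvf] at hne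
        exact ⟨u, hu, (Finset.mem_filter.1 hvf).2, min_ne_of_erase hne⟩
      · rw [Finset.erase_eq_of_notMem hvf] at hne
        exact absurd rfl hne
    · right
      rw [EquivMinus] at hnot
      push_neg at hnot
      obtain ⟨u, hu, hne⟩ := hnot
      have h1 : min d (outDeg E u X) = min d (outDeg E u ↑R) := hReq.2 u hu
      rw [h1] at hne
      rw [outDeg_coe, outDeg_coe, Finset.filter_erase] at hne
      by_cases hvf : v ∈ R.filter (fun w => E u w)
      · rw [Finset.card_erase_of_mem hvf] at hne
        exact ⟨u, hu, (Finset.mem_filter.1 hvf).2, min_ne_of_erase hne⟩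
      · rw [Finset.erase_eq_of_notMem hvf] at hne
        exact absurd rfl hne
  set Rp : Finset V :=
    R.filter (fun v => ∃ u, u ∉ A ∧ E v u ∧ (R.filter (fun w => E w u)).card ≤ d) with hRp
  set Rm : Finset V :=
    R.filter (fun v => ∃ u, u ∉ A ∧ E u v ∧ (R.filter (fun w => E u w)).card ≤ d) with hRm
  have hcover : R ⊆ Rp ∪ Rm := by
    intro v hv
    rcases hwit v hv with h | h
    · exact Finset.mem_union_left _ (Finset.mem_filter.2 ⟨hv, h⟩)
    · exact Finset.mem_union_right _ (Finset.mem_filter.2 ⟨hv, h⟩)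
  -- plus side
  have hplus : Rp.card ≤ d * nu (cutRel E A Aᶜ) := by
    set D : V → V → Prop := cutRel E A Aᶜ with hD
    set P : Finset V :=
      Finset.univ.filter (fun u => (Rp.filter (fun w => D w u)).card ≤ d) with hPdef
    obtain ⟨M, hM, _, hcard⟩ := core_extraction D A Aᶜ
      (fun x y h => ⟨h.1, h.2.1⟩) disjoint_compl_right d Rp P
      (fun u hu => (Finset.mem_filter.1 hu).2)
      (by
        intro v hv
        obtain ⟨u, huA, hEvu, hdeg⟩ := (Finset.mem_filter.1 hv).2
        have hvA : v ∈ A := hRA (Finset.mem_coe.2 ((Finset.mem_filter.1 hv).1))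
        refine ⟨u, ?_, ⟨hvA, huA, hEvu⟩⟩
        refine Finset.mem_filter.2 ⟨Finset.mem_univ _, le_trans (Finset.card_le_card ?_) hdeg⟩
        intro w hw
        rw [Finset.mem_filter] at hw ⊢
        exact ⟨(Finset.mem_filter.1 hw.1).1, hw.2.2.2⟩)
    exact le_trans hcard (Nat.mul_le_mul_left d (card_le_nu hM))
  -- minus side
  have hminus : Rm.card ≤ d * nu (cutRel E Aᶜ A) := by
    set D : V → V → Prop := fun x y => cutRel E Aᶜ A y x with hD
    set P : Finset V :=
      Finset.univ.filter (fun u => (Rm.filter (fun w => D w u)).card ≤ d) with hPdef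
    obtain ⟨M, hM, _, hcard⟩ := core_extraction D A Aᶜ
      (fun x y h => ⟨h.2.1, h.1⟩) disjoint_compl_right d Rm P
      (fun u hu => (Finset.mem_filter.1 hu).2)
      (by
        intro v hv
        obtain ⟨u, huA, hEuv, hdeg⟩ := (Finset.mem_filter.1 hv).2
        have hvA : v ∈ A := hRA (Finset.mem_coe.2 ((Finset.mem_filter.1 hv).1))
        refine ⟨u, ?_, ⟨huA, hvA, hEuv⟩⟩
        refine Finset.mem_filter.2 ⟨Finset.mem_univ _, le_trans (Finset.card_le_card ?_) hdeg⟩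
        intro w hw
        rw [Finset.mem_filter] at hw ⊢
        exact ⟨(Finset.mem_filter.1 hw.1).1, hw.2.2.2⟩)
    have hswap : IsIndMatching (cutRel E Aᶜ A) (M.image Prod.swap) :=
      isIndMatching_swap hM
    have : M.card ≤ nu (cutRel E Aᶜ A) := by
      rw [← Finset.card_image_of_injective M Prod.swap_injective]
      exact card_le_nu hswap
    exact le_trans hcard (Nat.mul_le_mul_left d this)
  refine ⟨R, hRA, hReq, ?_⟩
  calc R.card ≤ (Rp ∪ Rm).card := Finset.card_le_card hcover
    _ ≤ Rp.card + Rm.card := Finset.card_union_le _ _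
    _ ≤ d * nu (cutRel E A Aᶜ) + d * nu (cutRel E Aᶜ A) := Nat.add_le_add hplus hminus
    _ = d * bimimCut E A := by rw [bimimCut, Nat.mul_add]

end Rep
section Count
set_option linter.unusedSectionVars false
variable {V : Type} [Fintype V]

lemma card_small_powerset (F : Finset V) (k : ℕ) :
    (F.powerset.filter (fun S => S.card ≤ k)).card ≤ (F.card + 1) ^ k := by
  classical
  induction k with
  | zero =>
    rw [pow_zero]
    refine le_trans (Finset.card_le_card (fun S hS => ?_)) (Finset.card_singleton (∅ : Finset V)).le
    rw [Finset.mem_filter] at hS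
    rw [Finset.mem_singleton]
    exact Finset.card_eq_zero.1 (Nat.le_zero.1 hS.2)
  | succ k ihk =>
    have hsplit : F.powerset.filter (fun S => S.card ≤ k + 1) ⊆
        F.powerset.filter (fun S => S.card ≤ k) ∪ Finset.powersetCard (k+1) F := by
      intro S hS
      rw [Finset.mem_filter] at hS
      rcases Nat.lt_or_ge S.card (k+1) with h | h
      · exact Finset.mem_union_left _ (Finset.mem_filter.2 ⟨hS.1, by omega⟩)
      · exact Finset.mem_union_right _
          (Finset.mem_powersetCard.2 ⟨Finset.mem_powerset.1 hS.1, by omega⟩)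
    calc (F.powerset.filter (fun S => S.card ≤ k + 1)).card
        ≤ (F.powerset.filter (fun S => S.card ≤ k) ∪ Finset.powersetCard (k+1) F).card :=
          Finset.card_le_card hsplit
      _ ≤ (F.powerset.filter (fun S => S.card ≤ k)).card + (Finset.powersetCard (k+1) F).card :=
          Finset.card_union_le _ _
      _ ≤ (F.card + 1)^k + F.card ^ (k+1) := by
          refine Nat.add_le_add ihk ?_
          rw [Finset.card_powersetCard]
          exact Nat.choose_le_pow _ _
      _ ≤ (F.card + 1)^(k+1) := by
          have h1 : F.card ^ (k+1) ≤ F.card * (F.card + 1)^k := by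
            rw [pow_succ']
            exact Nat.mul_le_mul_left _ (Nat.pow_le_pow_left (Nat.le_succ _) k)
          have h2 : (F.card + 1)^(k+1) = (F.card + 1)^k + F.card * (F.card + 1)^k := by ring
          omega

lemma equivBoth_switch {E : V → V → Prop} {d : ℕ} {A X X' Z : Set V}
    (h1 : EquivBoth E d A X Z) (h2 : EquivBoth E d A X' Z) (Y : Set V) :
    EquivBoth E d A X Y ↔ EquivBoth E d A X' Y := by
  constructor <;> rintro ⟨p, m⟩ <;> refine ⟨fun u hu => ?_, fun u hu => ?_⟩
  · rw [h2.1 u hu, ← h1.1 u hu]; exact p u hu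
  · rw [h2.2 u hu, ← h1.2 u hu]; exact m u hu
  · rw [h1.1 u hu, ← h2.1 u hu]; exact p u hu
  · rw [h1.2 u hu, ← h2.2 u hu]; exact m u hu

end Count
section Main
set_option linter.unusedSectionVars false
variable {V : Type} [Fintype V]

lemma card_classes_le_one {E : V → V → Prop} {d : ℕ} {A : Set V}
    (hall : ∀ X Y : Set V, X ⊆ A → Y ⊆ A → EquivBoth E d A X Y) :
    Nat.card {Q : Set (Set V) | ∃ X, X ⊆ A ∧ Q = {Y | Y ⊆ A ∧ EquivBoth E d A X Y}} ≤ 1 := by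
  classical
  have hsub : {Q : Set (Set V) | ∃ X, X ⊆ A ∧ Q = {Y | Y ⊆ A ∧ EquivBoth E d A X Y}} ⊆
      {{Y : Set V | Y ⊆ A}} := by
    rintro Q ⟨X, hXA, rfl⟩
    rw [Set.mem_singleton_iff]
    ext Y
    simp only [Set.mem_setOf_eq]
    exact ⟨fun h => h.1, fun h => ⟨h, hall X Y hXA h⟩⟩
  calc Nat.card _ = Set.ncard _ := Nat.card_coe_set_eq _
    _ ≤ Set.ncard {{Y : Set V | Y ⊆ A}} := Set.ncard_le_ncard hsub (Set.toFinite _)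
    _ = 1 := Set.ncard_singleton _

theorem stmt_18' {V : Type} [Fintype V] (d : ℕ) (E : V → V → Prop) (A : Set V) :
    Nat.card {Q : Set (Set V) | ∃ X, X ⊆ A ∧ Q = {Y | Y ⊆ A ∧ EquivBoth E d A X Y}} ≤
      Nat.card V ^ (d * bimimCut E A) := by
  classical
  by_cases hk0 : d * bimimCut E A = 0
  · rw [hk0, pow_zero]
    apply card_classes_le_one
    rcases Nat.mul_eq_zero.1 hk0 with hd0 | hb0
    · intro X Y _ _
      subst hd0
      exact ⟨fun u _ => by simp, fun u _ => by simp⟩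
    · rw [bimimCut] at hb0
      have h1 : nu (cutRel E A Aᶜ) = 0 := by omega
      have h2 : nu (cutRel E Aᶜ A) = 0 := by omega
      have hne1 : ∀ x y, ¬ cutRel E A Aᶜ x y := by
        intro x y hxy
        have := card_le_nu (isIndMatching_singleton hxy)
        rw [h1] at this
        simpa using this
      have hne2 : ∀ x y, ¬ cutRel E Aᶜ A x y := by
        intro x y hxy
        have := card_le_nu (isIndMatching_singleton hxy)
        rw [h2] at this
        simpa using this
      have hin : ∀ (X : Set V), X ⊆ A → ∀ u, u ∉ A → inDeg E u X = 0 := by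
        intro X hXA u hu
        rw [inDeg]
        have : {w : V | E w u ∧ w ∈ X} = ∅ := by
          ext w
          simp only [Set.mem_setOf_eq, Set.mem_empty_iff_false, iff_false, not_and]
          intro hE hw
          exact hne1 w u ⟨hXA hw, hu, hE⟩
        rw [this]
        simp
      have hout : ∀ (X : Set V), X ⊆ A → ∀ u, u ∉ A → outDeg E u X = 0 := by
        intro X hXA u hu
        rw [outDeg]
        have : {w : V | E u w ∧ w ∈ X} = ∅ := by
          ext w
          simp only [Set.mem_setOf_eq, Set.mem_empty_iff_false, iff_false, not_and]
          intro hE hw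
          exact hne2 u w ⟨hu, hXA hw, hE⟩
        rw [this]
        simp
      intro X Y hXA hYA
      exact ⟨fun u hu => by rw [hin X hXA u hu, hin Y hYA u hu],
        fun u hu => by rw [hout X hXA u hu, hout Y hYA u hu]⟩
  · -- k ≥ 1 : there is a vertex outside A
    have hex : ∃ c, c ∉ A := by
      by_contra h
      push_neg at h
      have h1 : nu (cutRel E A Aᶜ) = 0 := nu_eq_zero _ (fun x y hxy => hxy.2.1 (h y))
      have h2 : nu (cutRel E Aᶜ A) = 0 := nu_eq_zero _ (fun x y hxy => hxy.1 (h x))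
      apply hk0
      rw [bimimCut, h1, h2]
      ring
    obtain ⟨c, hc⟩ := hex
    set k := d * bimimCut E A with hkdef
    have hQ : ∀ q : {Q : Set (Set V) // Q ∈
        {Q : Set (Set V) | ∃ X, X ⊆ A ∧ Q = {Y | Y ⊆ A ∧ EquivBoth E d A X Y}}},
        ∃ X, X ⊆ A ∧ (q : Set (Set V)) = {Y | Y ⊆ A ∧ EquivBoth E d A X Y} := fun q => q.2
    choose Xf hXfA hXfeq using hQ
    have hR : ∀ q, ∃ R : Finset V, ↑R ⊆ A ∧ EquivBoth E d A (Xf q) ↑R ∧ R.card ≤ k :=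
      fun q => rep_lemma E d A (Xf q) (hXfA q)
    choose Rf hRfA hRfeq hRfcard using hR
    have hmain : Nat.card {Q : Set (Set V) | ∃ X, X ⊆ A ∧
        Q = {Y | Y ⊆ A ∧ EquivBoth E d A X Y}} ≤
        Nat.card {S : Finset V // ↑S ⊆ A ∧ S.card ≤ k} := by
      refine Nat.card_le_card_of_injective
        (fun q => (⟨Rf q, hRfA q, hRfcard q⟩ : {S : Finset V // ↑S ⊆ A ∧ S.card ≤ k})) ?_
      intro q q' hqq'
      have hReq : Rf q = Rf q' := congrArg Subtype.val hqq'
      apply Subtype.ext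
      rw [hXfeq q, hXfeq q']
      ext Y
      simp only [Set.mem_setOf_eq]
      have hswitch := equivBoth_switch (hRfeq q) (hReq ▸ hRfeq q') Y
      exact ⟨fun h => ⟨h.1, (hswitch.1 h.2)⟩, fun h => ⟨h.1, (hswitch.2 h.2)⟩⟩
    refine le_trans hmain ?_
    rw [Nat.card_eq_fintype_card, Fintype.card_subtype]
    have hset : Finset.univ.filter (fun S : Finset V => ↑S ⊆ A ∧ S.card ≤ k) =
        A.toFinset.powerset.filter (fun S => S.card ≤ k) := by
      ext S
      simp [Set.subset_toFinset]
    rw [hset]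
    have hlt : A.toFinset.card + 1 ≤ Nat.card V := by
      rw [Nat.card_eq_fintype_card]
      have : A.toFinset ⊂ Finset.univ := by
        refine ⟨Finset.subset_univ _, fun hsub => ?_⟩
        exact hc (Set.mem_toFinset.1 (hsub (Finset.mem_univ c)))
      have := Finset.card_lt_card this
      rw [Finset.card_univ] at this
      omega
    calc (A.toFinset.powerset.filter (fun S => S.card ≤ k)).card
        ≤ (A.toFinset.card + 1) ^ k := card_small_powerset _ _
      _ ≤ Nat.card V ^ k := Nat.pow_le_pow_left hlt k

end Main

theorem stmt_18 {V : Type} [Fintype V] (d : ℕ) (E : V → V → Prop) (A : Set V) :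
    Nat.card {Q : Set (Set V) | ∃ X, X ⊆ A ∧ Q = {Y | Y ⊆ A ∧ EquivBoth E d A X Y}} ≤
      Nat.card V ^ (d * bimimCut E A) := by
  exact stmt_18' d E A
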